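/- Substitution lemma: let F be a field of characteristic ≠ 2. If q(z₁,…,zₙ) ∈ F[z] has a symmetric determinantal representation, and p is obtained from q by replacing some variable z_k by the product uv of two new variables, then p also has a symmetric determinantal representation (as a polynomial in z₁,…,z_{k−1},z_{k+1},…,zₙ,u,v). -/

import Mathlib

open MvPolynomial in
/-- A polynomial in variables indexed by `σ` has a symmetric determinantal
representation over `F`. -/
def HasSymmDetRep {F : Type*} [Field F] {σ : Type*} [Fintype σ]
    (p : MvPolynomial σ F) : Prop :=
  ∃ (m : ℕ) (A0 : Matrix (Fin m) (Fin m) F) (A : σ → Matrix (Fin m) (Fin m) F),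
    A0.IsSymm ∧ (∀ i, (A i).IsSymm) ∧
    p = Matrix.det (A0.map C + ∑ i, (X i : MvPolynomial σ F) • (A i).map C)

open Matrix

lemma aux_submatrix_sum {R : Type*} [AddCommMonoid R] {ι p q p' q' : Type*} (s : Finset ι)
    (f : ι → Matrix p q R) (a : p' → p) (b : q' → q) :
    (∑ j ∈ s, f j).submatrix a b = ∑ j ∈ s, (f j).submatrix a b := by
  ext i l; simp [Matrix.sum_apply]

lemma aux_isSymm_submatrix {R p p' : Type*} (f : p' → p)
    (M : Matrix p p R) (h : M.IsSymm) : (M.submatrix f f).IsSymm := by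
  unfold Matrix.IsSymm
  rw [transpose_submatrix, h]

lemma aux_ite_apply {c : Prop} [Decidable c] {p q Rt : Type*} (M N : Matrix p q Rt) (i : p)
    (j : q) : (if c then M else N) i j = if c then M i j else N i j := by split <;> rfl

set_option maxHeartbeats 2000000 in
open MvPolynomial in
theorem substitution_lemma {F : Type*} [Field F] (h2 : (2 : F) ≠ 0) {n : ℕ}
    (q : MvPolynomial (Fin n) F) (hq : HasSymmDetRep q) (k : Fin n) :
    HasSymmDetRep
      (MvPolynomial.aeval (fun i : Fin n =>
          if i = k then
            (X (Sum.inr 0) * X (Sum.inr 1) : MvPolynomial (Fin n ⊕ Fin 2) F)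
          else X (Sum.inl i)) q) := by
  classical
  obtain ⟨m, A0, A, hA0, hA, hqdet⟩ := hq
  set R := MvPolynomial (Fin n ⊕ Fin 2) F
  set f : Fin n → R := fun i : Fin n =>
      if i = k then (X (Sum.inr 0) * X (Sum.inr 1) : R) else X (Sum.inl i) with hf
  -- the building blocks over F
  set S : Matrix (Fin m ⊕ Fin m) (Fin m ⊕ Fin m) F := fromBlocks 0 1 1 0 with hS
  set d : F := S.det with hd
  set w : Matrix (Fin m) (Fin m) F := (-(2:F)⁻¹) • 1 with hw
  set ι := (Fin m ⊕ (Fin m ⊕ Fin m)) ⊕ Fin 1 with hι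
  set B0 : Matrix ι ι F := fromBlocks (fromBlocks A0 0 0 S) 0 0 (d • 1) with hB0
  set Bf : (Fin n ⊕ Fin 2) → Matrix ι ι F := fun j => Sum.elim
      (fun i => fromBlocks (fromBlocks (if i = k then 0 else A i) 0 0 0) 0 0 0)
      (fun t => if t = 0 then
          fromBlocks (fromBlocks 0 (fromCols (A k) 0) (fromRows (A k) 0) 0) 0 0 0
        else fromBlocks (fromBlocks 0 (fromCols 0 w) (fromRows 0 w) 0) 0 0 0) j with hBf
  have hSsymm : S.IsSymm := by
    rw [hS]
    exact IsSymm.fromBlocks isSymm_zero (by simp) isSymm_zero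
  have hSS : S * S = 1 := by
    rw [hS]; simp [fromBlocks_multiply, ← fromBlocks_one]
  have hdd : d * d = 1 := by
    rw [hd, ← det_mul, hSS, det_one]
  have hwsymm : w.IsSymm := by rw [hw]; exact (isSymm_one).smul _
  -- the polynomial-entry matrix
  set u : R := X (Sum.inr 0) with hu
  set v : R := X (Sum.inr 1) with hv
  set MP : Matrix (Fin m) (Fin m) R :=
    A0.map C + ∑ i : Fin n, (if i = k then 0 else (X (Sum.inl i) : R) • (A i).map C) with hMP
  set α : Matrix (Fin m) (Fin m ⊕ Fin m) R :=
    u • fromCols ((A k).map C) 0 + v • fromCols 0 (w.map C) with hα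
  set β : Matrix (Fin m ⊕ Fin m) (Fin m) R :=
    u • fromRows ((A k).map C) 0 + v • fromRows 0 (w.map C) with hβ
  set SP : Matrix (Fin m ⊕ Fin m) (Fin m ⊕ Fin m) R := S.map C with hSP
  have hSPblocks : SP = fromBlocks 0 1 1 0 := by
    rw [hSP, hS]
    ext (i|i) (j|j) <;>
      simp [Matrix.map_apply, Matrix.one_apply, apply_ite (C (σ := Fin n ⊕ Fin 2))]
  -- key structural identity
  have hstruct : B0.map C + ∑ j : Fin n ⊕ Fin 2, (X j : R) • (Bf j).map C =
      fromBlocks (fromBlocks MP α β SP) 0 0 ((C d : R) • 1) := by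
    refine Matrix.ext fun i j => ?_
    rcases i with ((a | (a | a)) | a) <;> rcases j with ((b | (b | b)) | b) <;>
      simp [hB0, hBf, hMP, hα, hβ, hSP, hu, hv, Matrix.sum_apply, Fintype.sum_sum_type,
        Fin.sum_univ_two, Matrix.one_apply, apply_ite (C (σ := Fin n ⊕ Fin 2) (R := F)),
        aux_ite_apply, mul_ite, Finset.sum_ite_eq,
        Fin.eq_zero, fromCols_apply_inl, fromCols_apply_inr,
        fromRows_apply_inl, fromRows_apply_inr]
  -- Schur complement computation
  have hSPSP : SP * SP = 1 := by
    rw [hSP, ← Matrix.map_mul, hSS]; exact Matrix.map_one _ (map_zero _) (map_one _)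
  letI : Invertible SP := ⟨SP, hSPSP, hSPSP⟩
  have hinv : ⅟SP = SP := rfl
  have hαβ : α * SP * β = -((u * v) • (A k).map C) := by
    have hw' : w.map ⇑(C : F →+* R) = (C (-(2:F)⁻¹) : R) • (1 : Matrix (Fin m) (Fin m) R) := by
      rw [hw]; ext i j; by_cases h : i = j <;> simp [Matrix.one_apply, h]
    have hc2 : (C (-(2:F)⁻¹) : R) + C (-(2:F)⁻¹) = -1 := by
      rw [← map_add, ← neg_add, ← two_mul, mul_inv_cancel₀ h2]
      simp
    rw [hα, hβ, hSPblocks, hw']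
    simp only [Matrix.add_mul, Matrix.mul_add, Matrix.smul_mul, Matrix.mul_smul,
      fromCols_mul_fromBlocks, fromCols_mul_fromRows, Matrix.mul_zero, Matrix.zero_mul,
      Matrix.mul_one, Matrix.one_mul, zero_add, add_zero, smul_smul, smul_add]
    simp only [smul_zero, zero_add, add_zero, ← add_smul]
    rw [show u * (v * (C (-(2:F)⁻¹) : R)) + v * (u * (C (-(2:F)⁻¹) : R))
        = (u * v) * ((C (-(2:F)⁻¹) : R) + C (-(2:F)⁻¹)) from by ring, hc2, mul_neg_one, neg_smul]
  have hdetSP : SP.det = C d := by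
    rw [hSP, hd, RingHom.map_det, RingHom.mapMatrix_apply]
  -- aeval of q
  have haeval : (aeval f) q = (MP + (u * v) • (A k).map C).det := by
    have key : ∀ c : Fin n → R, (∑ i : Fin n, f i * c i)
        = (∑ i : Fin n, if i = k then 0 else X (Sum.inl i) * c i) + (u * v) * c k := by
      intro c
      rw [Finset.sum_congr rfl (fun i _ => show f i * c i
          = (if i = k then 0 else X (Sum.inl i) * c i) + (if i = k then (u * v) * c i else 0) by
            by_cases h : i = k <;> simp [hf, h, hu, hv]),
        Finset.sum_add_distrib, Finset.sum_ite_eq' Finset.univ k]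
      simp
    rw [hqdet, AlgHom.map_det]
    congr 1
    ext a b
    simp only [AlgHom.mapMatrix_apply, Matrix.map_apply, Matrix.add_apply, Matrix.sum_apply,
      Matrix.smul_apply, map_add, map_sum, _root_.map_mul, aeval_X, aeval_C, smul_eq_mul,
      show (algebraMap F R) = C from rfl, hMP,
      apply_ite (fun M : Matrix (Fin m) (Fin m) R => M a b), Matrix.zero_apply]
    rw [key (fun i => C (A i a b))]
    rw [add_assoc]
  -- assemble
  refine ⟨Fintype.card ι, (B0.submatrix (Fintype.equivFin ι).symm (Fintype.equivFin ι).symm),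
    fun j => ((Bf j).submatrix (Fintype.equivFin ι).symm (Fintype.equivFin ι).symm),
    aux_isSymm_submatrix _ _ ?_, fun j => aux_isSymm_submatrix _ _ ?_, ?_⟩
  · rw [hB0]
    refine IsSymm.fromBlocks (IsSymm.fromBlocks hA0 (by simp) hSsymm) (by simp)
      ((isSymm_one).smul _)
  · rcases j with i | t
    · simp only [hBf, Sum.elim_inl]
      refine IsSymm.fromBlocks (IsSymm.fromBlocks ?_ (by simp) isSymm_zero) (by simp) isSymm_zero
      split <;> [exact isSymm_zero; exact hA i]
    · simp only [hBf, Sum.elim_inr]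
      split <;>
      · refine IsSymm.fromBlocks (IsSymm.fromBlocks isSymm_zero ?_ isSymm_zero) (by simp)
          isSymm_zero
        simp [transpose_fromCols, (hA k).eq, hwsymm.eq]
  · -- determinant identity
    have hmap : ∀ (M : Matrix ι ι F),
        (M.submatrix (Fintype.equivFin ι).symm (Fintype.equivFin ι).symm).map ⇑(C : F →+* R)
          = (M.map ⇑(C : F →+* R)).submatrix (Fintype.equivFin ι).symm (Fintype.equivFin ι).symm := by
      intro M; rw [Matrix.submatrix_map]
    rw [hmap]
    conv_lhs => rw [haeval]
    have : (B0.map ⇑(C : F →+* R)).submatrix (Fintype.equivFin ι).symm (Fintype.equivFin ι).symm +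
        ∑ j : Fin n ⊕ Fin 2, (X j : R) •
          ((Bf j).map ⇑(C : F →+* R)).submatrix (Fintype.equivFin ι).symm (Fintype.equivFin ι).symm
        = (B0.map ⇑(C : F →+* R) + ∑ j : Fin n ⊕ Fin 2, (X j : R) • (Bf j).map ⇑(C : F →+* R)).submatrix
            (Fintype.equivFin ι).symm (Fintype.equivFin ι).symm := by
      ext i l
      simp [Matrix.sum_apply]
    simp only [hmap] at this ⊢
    rw [this, Matrix.det_submatrix_equiv_self, hstruct]
    rw [Matrix.det_fromBlocks_zero₂₁, Matrix.det_fromBlocks₂₂, hinv, hαβ, hdetSP]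
    have h11 : ((C d : R) • (1 : Matrix (Fin 1) (Fin 1) R)).det = C d := by
      rw [Matrix.det_fin_one]; simp
    rw [h11, sub_neg_eq_add]
    ring_nf
    rw [show ((C d : R))^2 = 1 from by rw [sq, ← _root_.map_mul, hdd, MvPolynomial.C_1], one_mul]
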